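/- arXiv:2404.09525 — 2 statements merged into one kernel-verified Lean document; each statement's English description precedes it below -/
import Mathlib

section
/- The Gauss measure with density f_G(x) = (1/ln 2)·1/(1+x) on (0,1) is invariant under the Gauss map T(x) = 1/x - ⌊1/x⌋: for every Borel set A ⊆ (0,1), μ(T^{-1}(A)) = μ(A), where μ(A) = ∫_A f_G. -/
open MeasureTheory Set Filter
open scoped ENNReal Topology

lemma lintegral_image_1d {s : Set ℝ} {f f' : ℝ → ℝ} (hs : MeasurableSet s)
    (hf' : ∀ x ∈ s, HasDerivWithinAt f (f' x) s x) (hf : InjOn f s) (g : ℝ → ℝ≥0∞) :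
    ∫⁻ x in f '' s, g x = ∫⁻ x in s, ENNReal.ofReal |f' x| * g (f x) := by
  simpa only [ContinuousLinearMap.det_toSpanSingleton] using
    lintegral_image_eq_lintegral_abs_det_fderiv_mul volume hs
      (fun x hx => (hf' x hx).hasFDerivWithinAt) hf g

lemma tele (c y : ℝ) (hc : 0 < c) (hy : 0 ≤ y) :
    ∑' k : ℕ, ENNReal.ofReal (1 / (c * ((y + k + 1) * (y + k + 2)))) =
      ENNReal.ofReal (1 / (c * (1 + y))) := by
  set g : ℕ → ℝ := fun k => 1 / (c * (y + k + 1)) with hg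
  have hpos : ∀ k : ℕ, (0:ℝ) < y + k + 1 := fun k => by positivity
  set f : ℕ → ℝ := fun k => 1 / (c * ((y + k + 1) * (y + k + 2))) with hf
  have hfnn : ∀ k, 0 ≤ f k := fun k => by positivity
  have hterm : ∀ k : ℕ, f k = g k - g (k + 1) := by
    intro k
    have h1 := hpos k
    simp only [hf, hg]
    push_cast
    field_simp
    ring
  have htend : Tendsto g atTop (𝓝 0) := by
    have h1 : Tendsto (fun k : ℕ => c * (y + k + 1)) atTop atTop := by
      apply Tendsto.const_mul_atTop hc
      apply tendsto_atTop_add_const_right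
      apply tendsto_atTop_add_const_left
      exact tendsto_natCast_atTop_atTop
    simpa only [hg, one_div, Pi.inv_def] using h1.inv_tendsto_atTop
  have hsum : HasSum f (g 0) := by
    rw [hasSum_iff_tendsto_nat_of_nonneg hfnn]
    have hps : ∀ n, ∑ i ∈ Finset.range n, f i = g 0 - g n := by
      intro n
      simp_rw [hterm]
      exact Finset.sum_range_sub' g n
    simp_rw [hps]
    simpa using (tendsto_const_nhds.sub htend)
  rw [← ENNReal.ofReal_tsum_of_nonneg hfnn hsum.summable, hsum.tsum_eq]
  norm_num [hg, add_comm]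

/-- The Gauss measure, with density f_G(x) = 1/((ln 2)(1+x)) with respect to Lebesgue
measure on (0,1), is invariant under the Gauss map T(x) = 1/x - ⌊1/x⌋. -/
theorem stmt_9 (T : ℝ → ℝ) (hT : ∀ x : ℝ, T x = 1 / x - ⌊1 / x⌋)
    (μ : Measure ℝ)
    (hμ : μ = (volume.restrict (Set.Ioo (0:ℝ) 1)).withDensity
            (fun x => ENNReal.ofReal (1 / (Real.log 2 * (1 + x))))) :
    ∀ A : Set ℝ, MeasurableSet A → A ⊆ Set.Ioo (0:ℝ) 1 → μ (T ⁻¹' A) = μ A := by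
  intro A hA hA1
  have hTfun : T = fun x : ℝ => 1 / x - (⌊1 / x⌋ : ℝ) := funext hT
  subst hTfun
  have hTm : Measurable fun x : ℝ => 1 / x - (⌊1 / x⌋ : ℝ) := by
    exact (measurable_const.div measurable_id).sub
      (measurable_from_top.comp ((measurable_const.div measurable_id).floor) : Measurable fun x : ℝ => ((⌊1 / x⌋ : ℤ) : ℝ))
  set ψ : ℕ → ℝ → ℝ := fun k y => (y + k + 1)⁻¹ with hψ
  set S : ℕ → Set ℝ := fun k => ψ k '' A with hS
  have hSalt : ∀ k : ℕ, S k =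
      (fun x : ℝ => x⁻¹ - (k + 1)) ⁻¹' A ∩ Ioo ((k + 2 : ℝ))⁻¹ ((k + 1 : ℝ))⁻¹ := by
    intro k
    ext x
    constructor
    · rintro ⟨y, hyA, rfl⟩
      obtain ⟨hy0, hy1⟩ := hA1 hyA
      have hp : (0:ℝ) < y + k + 1 := by positivity
      refine ⟨?_, ?_, ?_⟩
      · simp only [mem_preimage, hψ, inv_inv]
        rw [show y + (k:ℝ) + 1 - ((k:ℝ) + 1) = y by ring]
        exact hyA
      · simp only [hψ]
        rw [inv_lt_inv₀ (by positivity) hp]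
        linarith
      · simp only [hψ]
        rw [inv_lt_inv₀ hp (by positivity)]
        linarith
    · rintro ⟨hxA, hx1, hx2⟩
      have hx0 : 0 < x := lt_trans (by positivity) hx1
      refine ⟨x⁻¹ - (k + 1), hxA, ?_⟩
      simp only [hψ]
      rw [show x⁻¹ - ((k:ℝ) + 1) + k + 1 = x⁻¹ by ring, inv_inv]
  have hSsub : ∀ k : ℕ, S k ⊆ Ioo ((k + 2 : ℝ))⁻¹ ((k + 1 : ℝ))⁻¹ := by
    intro k
    rw [hSalt k]; exact inter_subset_right
  have hSm : ∀ k : ℕ, MeasurableSet (S k) := by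
    intro k
    rw [hSalt k]
    exact ((measurable_inv.sub measurable_const) hA).inter measurableSet_Ioo
  have hdisj : Pairwise (Function.onFun Disjoint S) := by
    have key : ∀ i j : ℕ, i < j → Disjoint (S i) (S j) := by
      intro i j h
      apply Set.disjoint_left.2
      intro x hxi hxj
      obtain ⟨hi1, hi2⟩ := hSsub i hxi
      obtain ⟨hj1, hj2⟩ := hSsub j hxj
      have hij : ((j:ℝ) + 1)⁻¹ ≤ ((i:ℝ) + 2)⁻¹ := by
        apply inv_anti₀ (by positivity)
        have : (i:ℝ) + 1 ≤ j := by exact_mod_cast Nat.succ_le_of_lt h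
        linarith
      linarith
    intro i j hij
    rcases hij.lt_or_gt with h | h
    · exact key i j h
    · exact (key j i h).symm
  have hset : (fun x : ℝ => 1 / x - (⌊1 / x⌋ : ℝ)) ⁻¹' A ∩ Ioo 0 1 = ⋃ k : ℕ, S k := by
    ext x
    constructor
    · rintro ⟨hxA, hx0, hx1⟩
      have h1x : 1 < 1 / x := by rw [lt_div_iff₀ hx0]; linarith
      set m : ℤ := ⌊1 / x⌋ with hm
      have hm1 : 1 ≤ m := by
        rw [hm]; exact Int.le_floor.2 (by exact_mod_cast h1x.le)
      set y : ℝ := 1 / x - m with hy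
      have hyA : y ∈ A := hxA
      refine mem_iUnion.2 ⟨(m - 1).toNat, y, hyA, ?_⟩
      have hmk : (((m - 1).toNat : ℕ) : ℝ) = (m : ℝ) - 1 := by
        have : (((m - 1).toNat : ℕ) : ℤ) = m - 1 := Int.toNat_of_nonneg (by omega)
        exact_mod_cast this
      simp only [hψ]
      rw [hmk, show y + ((m:ℝ) - 1) + 1 = 1 / x by rw [hy]; ring, one_div, inv_inv]
    · intro hx
      obtain ⟨k, y, hyA, rfl⟩ := mem_iUnion.1 hx
      obtain ⟨hy0, hy1⟩ := hA1 hyA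
      have hp : (1:ℝ) < y + k + 1 := by
        have : (0:ℝ) ≤ k := Nat.cast_nonneg k
        linarith
      have hp0 : (0:ℝ) < y + k + 1 := by linarith
      have hinv : 1 / (ψ k y) = y + k + 1 := by
        simp only [hψ, one_div, inv_inv]
      have hfl : ⌊y + (k:ℝ) + 1⌋ = (k : ℤ) + 1 := by
        rw [Int.floor_eq_iff]
        constructor <;> push_cast <;> linarith
      refine ⟨?_, ?_, ?_⟩
      · simp only [mem_preimage]
        rw [hinv, hfl]
        push_cast
        rw [show y + (k:ℝ) + 1 - ((k:ℝ) + 1) = y by ring]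
        exact hyA
      · simp only [hψ]; positivity
      · simp only [hψ]
        rw [inv_lt_one_iff₀]
        right; linarith
  have hL : 0 < Real.log 2 := Real.log_pos one_lt_two
  rw [hμ, withDensity_apply _ (hTm hA), withDensity_apply _ hA,
      Measure.restrict_restrict (hTm hA), Measure.restrict_restrict hA,
      inter_eq_self_of_subset_left hA1, hset, lintegral_iUnion hSm hdisj]
  have hterm : ∀ k : ℕ, (∫⁻ x in S k, ENNReal.ofReal (1 / (Real.log 2 * (1 + x)))) =
      ∫⁻ y in A, ENNReal.ofReal (1 / (Real.log 2 * ((y + k + 1) * (y + k + 2)))) := by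
    intro k
    have hderiv : ∀ y ∈ A, HasDerivWithinAt (ψ k) (-(1 / (y + (k:ℝ) + 1) ^ 2)) A y := by
      intro y hy
      obtain ⟨hy0, hy1⟩ := hA1 hy
      have hp : (0:ℝ) < y + k + 1 := by positivity
      have h1 : HasDerivAt (fun y : ℝ => y + k + 1) 1 y :=
        ((hasDerivAt_id y).add_const (k:ℝ)).add_const 1
      have h2 := h1.inv (ne_of_gt hp)
      have h3 : -1 / (y + (k:ℝ) + 1) ^ 2 = -(1 / (y + (k:ℝ) + 1) ^ 2) := by ring
      rw [h3] at h2
      exact h2.hasDerivWithinAt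
    have hinj : InjOn (ψ k) A := by
      intro a ha b hb hab
      simp only [hψ] at hab
      have := inv_injective hab
      linarith
    rw [hS, lintegral_image_1d hA hderiv hinj]
    apply setLIntegral_congr_fun hA
    intro y hy
    obtain ⟨hy0, hy1⟩ := hA1 hy
    have hp : (0:ℝ) < y + k + 1 := by positivity
    simp only [hψ]
    rw [abs_neg, abs_of_pos (by positivity), ← ENNReal.ofReal_mul (by positivity)]
    congr 1
    have h1 : (1:ℝ) + (y + k + 1)⁻¹ ≠ 0 := by positivity
    field_simp
    ring
  simp_rw [hterm]
  have hmeas : ∀ k : ℕ, AEMeasurable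
      (fun y : ℝ => ENNReal.ofReal (1 / (Real.log 2 * ((y + k + 1) * (y + k + 2)))))
      (volume.restrict A) := by
    intro k
    apply Measurable.aemeasurable
    apply Measurable.ennreal_ofReal
    apply measurable_const.div
    exact (((measurable_id.add_const (k:ℝ)).add_const 1).mul
      ((measurable_id.add_const (k:ℝ)).add_const 2)).const_mul _
  rw [← lintegral_tsum hmeas]
  apply setLIntegral_congr_fun hA
  intro y hy
  obtain ⟨hy0, hy1⟩ := hA1 hy
  exact tele (Real.log 2) y hL hy0.le
end

section
/- Let β = (1+√5)/2. The function f_inv on (0,1) defined by f_inv(x) = (1+2β)/(2+β) for 0 < x < 1/β and f_inv(x) = (1+β)/(2+β) for 1/β < x < 1 is a probability density, and the associated measure is invariant under the map T(x) = β·x - ⌊β·x⌋ on [0,1). -/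
open MeasureTheory Set

/-- For the golden mean β = (1+√5)/2, the density f_inv (equal to (1+2β)/(2+β) on
(0,1/β) and (1+β)/(2+β) on (1/β,1)) defines a probability measure on [0,1) which is
invariant under T(x) = βx - ⌊βx⌋. -/
theorem stmt_16 (β : ℝ) (hβ : β = (1 + Real.sqrt 5) / 2)
    (T : ℝ → ℝ) (hT : ∀ x : ℝ, T x = β * x - ⌊β * x⌋)
    (finv : ℝ → ℝ)
    (hfinv : ∀ x : ℝ, finv x =
      if x < 1 / β then (1 + 2 * β) / (2 + β) else (1 + β) / (2 + β))
    (μ : Measure ℝ)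
    (hμ : μ = (volume.restrict (Set.Ico (0:ℝ) 1)).withDensity
      (fun x => ENNReal.ofReal (finv x))) :
    IsProbabilityMeasure μ ∧
    ∀ A : Set ℝ, MeasurableSet A → A ⊆ Set.Ico (0:ℝ) 1 → μ (T ⁻¹' A) = μ A := by
  have h5 : Real.sqrt 5 ^ 2 = 5 := Real.sq_sqrt (by norm_num)
  have h5n : (0:ℝ) ≤ Real.sqrt 5 := Real.sqrt_nonneg 5
  have hβ2 : β ^ 2 = β + 1 := by rw [hβ]; nlinarith
  have hβ1 : 1 < β := by
    have : (2:ℝ) < Real.sqrt 5 := by nlinarith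
    rw [hβ]; linarith
  have hβlt2 : β < 2 := by
    have : Real.sqrt 5 < 3 := by nlinarith
    rw [hβ]; linarith
  have hβ0 : 0 < β := by linarith
  set γ : ℝ := 1 / β with hγdef
  have hγ : γ = β - 1 := by
    rw [hγdef]; field_simp; nlinarith
  have hγ0 : 0 < γ := by rw [hγ]; linarith
  have hγ1 : γ < 1 := by rw [hγ]; linarith
  set c1 : ℝ := (1 + 2 * β) / (2 + β) with hc1def
  set c2 : ℝ := (1 + β) / (2 + β) with hc2def
  have h2β : (0:ℝ) < 2 + β := by linarith
  have hc1 : 0 ≤ c1 := by positivity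
  have hc2 : 0 ≤ c2 := by positivity
  have hc1c2 : c1 * β⁻¹ = c2 := by
    rw [hc1def, hc2def]; field_simp; nlinarith
  have hc2c1 : c2 * β⁻¹ = c1 - c2 := by
    rw [hc1def, hc2def]; field_simp; nlinarith
  have hc21 : c2 ≤ c1 := by
    rw [hc1def, hc2def]; gcongr; linarith
  have hfinv' : ∀ x : ℝ, finv x = if x < γ then c1 else c2 := hfinv
  -- value of μ on measurable sets
  have key : ∀ S : Set ℝ, MeasurableSet S →
      μ S = ENNReal.ofReal c1 * volume (S ∩ Ico 0 γ)
          + ENNReal.ofReal c2 * volume (S ∩ Ico γ 1) := by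
    intro S hS
    rw [hμ, withDensity_apply _ hS, Measure.restrict_restrict hS]
    have hsplit : S ∩ Ico (0:ℝ) 1 = (S ∩ Ico 0 γ) ∪ (S ∩ Ico γ 1) := by
      rw [← inter_union_distrib_left, Ico_union_Ico_eq_Ico hγ0.le hγ1.le]
    have hm1 : MeasurableSet (S ∩ Ico (0:ℝ) γ) := hS.inter measurableSet_Ico
    have hm2 : MeasurableSet (S ∩ Ico γ 1) := hS.inter measurableSet_Ico
    have hdisj : Disjoint (S ∩ Ico (0:ℝ) γ) (S ∩ Ico γ 1) :=
      (Set.Ico_disjoint_Ico_same).mono inter_subset_right inter_subset_right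
    rw [hsplit, lintegral_union hm2 hdisj]
    congr 1
    · rw [setLIntegral_congr_fun hm1 (fun x hx =>
        by rw [hfinv' x, if_pos hx.2.2]), setLIntegral_const, mul_comm]
    · rw [setLIntegral_congr_fun hm2 (fun x hx =>
        by rw [hfinv' x, if_neg (not_lt.2 hx.2.1)]), setLIntegral_const, mul_comm]
  have hTm : Measurable T := by
    have : T = fun x => β * x - ⌊β * x⌋ := funext hT
    rw [this]
    have h1 : Measurable fun x : ℝ => ((⌊β * x⌋ : ℤ) : ℝ) :=
      measurable_from_top.comp (Int.measurable_floor.comp (measurable_id.const_mul β))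
    exact (measurable_id.const_mul β).sub h1
  constructor
  · constructor
    rw [key univ MeasurableSet.univ, univ_inter, univ_inter,
      Real.volume_Ico, Real.volume_Ico,
      ← ENNReal.ofReal_mul hc1, ← ENNReal.ofReal_mul hc2,
      ← ENNReal.ofReal_add (mul_nonneg hc1 (by linarith)) (mul_nonneg hc2 (by linarith))]
    rw [show c1 * (γ - 0) + c2 * (1 - γ) = 1 by
      rw [hγ, hc1def, hc2def]; field_simp; nlinarith]
    exact ENNReal.ofReal_one
  · intro A hA hA01
    -- decompose the preimage
    have hpre1 : T ⁻¹' A ∩ Ico 0 γ = (β * ·) ⁻¹' A := by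
      ext x
      simp only [mem_inter_iff, mem_preimage, mem_Ico]
      constructor
      · rintro ⟨hxA, hx0, hxγ⟩
        have h01 : (0:ℝ) ≤ β * x := by positivity
        have h11 : β * x < 1 := by
          have := mul_lt_mul_of_pos_left hxγ hβ0
          rwa [hγdef, mul_one_div, div_self hβ0.ne'] at this
        have hfl : ⌊β * x⌋ = 0 := Int.floor_eq_zero_iff.2 ⟨h01, h11⟩
        rwa [hT, hfl, Int.cast_zero, sub_zero] at hxA
      · intro hx
        obtain ⟨h01, h11⟩ := hA01 hx
        have hfl : ⌊β * x⌋ = 0 := Int.floor_eq_zero_iff.2 ⟨h01, h11⟩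
        refine ⟨by rwa [hT, hfl, Int.cast_zero, sub_zero], ?_, ?_⟩
        · nlinarith
        · rw [hγdef, lt_div_iff₀ hβ0]; linarith
    have hpre2 : T ⁻¹' A ∩ Ico γ 1 = (fun x => β * x - 1) ⁻¹' (A ∩ Ico 0 γ) := by
      ext x
      simp only [mem_inter_iff, mem_preimage, mem_Ico]
      constructor
      · rintro ⟨hxA, hxγ, hx1⟩
        have h1 : 1 ≤ β * x := by
          have := mul_le_mul_of_nonneg_left hxγ hβ0.le
          rwa [hγdef, mul_one_div, div_self hβ0.ne'] at this
        have h2 : β * x < β := by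
          have := mul_lt_mul_of_pos_left hx1 hβ0
          linarith
        have hfl : ⌊β * x⌋ = 1 := by
          rw [Int.floor_eq_iff]
          push_cast
          exact ⟨h1, by linarith⟩
        rw [hT, hfl, Int.cast_one] at hxA
        exact ⟨hxA, by linarith, by rw [hγ]; linarith⟩
      · rintro ⟨hxA, h0, hγ'⟩
        have h1 : 1 ≤ β * x := by linarith
        have h2 : β * x < β := by rw [hγ] at hγ'; linarith
        have hfl : ⌊β * x⌋ = 1 := by
          rw [Int.floor_eq_iff]
          push_cast
          exact ⟨h1, by linarith⟩
        refine ⟨by rwa [hT, hfl, Int.cast_one], ?_, ?_⟩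
        · rw [hγdef, div_le_iff₀ hβ0]; linarith
        · have := lt_of_mul_lt_mul_left (by linarith : β * x < β * 1) hβ0.le
          linarith
    -- volumes
    have hv1 : volume (T ⁻¹' A ∩ Ico 0 γ) = ENNReal.ofReal β⁻¹ * volume A := by
      rw [hpre1, Real.volume_preimage_mul_left hβ0.ne' A, abs_of_pos (by positivity)]
    have hv2 : volume (T ⁻¹' A ∩ Ico γ 1)
        = ENNReal.ofReal β⁻¹ * volume (A ∩ Ico 0 γ) := by
      rw [hpre2]
      have hcomp : (fun x : ℝ => β * x - 1) ⁻¹' (A ∩ Ico 0 γ)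
          = (β * ·) ⁻¹' ((fun y : ℝ => y - 1) ⁻¹' (A ∩ Ico 0 γ)) := rfl
      rw [hcomp, Real.volume_preimage_mul_left hβ0.ne', abs_of_pos (by positivity)]
      congr 1
      simpa [sub_eq_add_neg, add_comm] using
        measure_preimage_add_right volume (-1 : ℝ) (A ∩ Ico 0 γ)
    have hAsplit : volume A = volume (A ∩ Ico 0 γ) + volume (A ∩ Ico γ 1) := by
      have : A = (A ∩ Ico 0 γ) ∪ (A ∩ Ico γ 1) := by
        rw [← inter_union_distrib_left, Ico_union_Ico_eq_Ico hγ0.le hγ1.le,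
          inter_eq_left.2 hA01]
      conv_lhs => rw [this]
      exact measure_union
        ((Set.Ico_disjoint_Ico_same).mono inter_subset_right inter_subset_right)
        (hA.inter measurableSet_Ico)
    rw [key _ (hTm hA), key _ hA, hv1, hv2, hAsplit]
    set u := volume (A ∩ Ico 0 γ)
    set v := volume (A ∩ Ico γ 1)
    have e1 : ENNReal.ofReal c1 * ENNReal.ofReal β⁻¹ = ENNReal.ofReal c2 := by
      rw [← ENNReal.ofReal_mul hc1, hc1c2]
    have e2 : ENNReal.ofReal c2 * ENNReal.ofReal β⁻¹ = ENNReal.ofReal (c1 - c2) := by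
      rw [← ENNReal.ofReal_mul hc2, hc2c1]
    have e3 : ENNReal.ofReal c2 + ENNReal.ofReal (c1 - c2) = ENNReal.ofReal c1 := by
      rw [← ENNReal.ofReal_add hc2 (by linarith)]
      ring_nf
    calc ENNReal.ofReal c1 * (ENNReal.ofReal β⁻¹ * (u + v))
            + ENNReal.ofReal c2 * (ENNReal.ofReal β⁻¹ * u)
        = (ENNReal.ofReal c1 * ENNReal.ofReal β⁻¹) * (u + v)
            + (ENNReal.ofReal c2 * ENNReal.ofReal β⁻¹) * u := by ring
      _ = ENNReal.ofReal c2 * (u + v) + ENNReal.ofReal (c1 - c2) * u := by rw [e1, e2]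
      _ = (ENNReal.ofReal c2 + ENNReal.ofReal (c1 - c2)) * u + ENNReal.ofReal c2 * v := by
            ring
      _ = ENNReal.ofReal c1 * u + ENNReal.ofReal c2 * v := by rw [e3]
end
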